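/- Suppose X ⊂ ℂ² is essentially k-dependent and σ is a nonzero polynomial of total degree n. If Y := X minus the zero set of σ is nonempty, then Y is essentially (k-n)-dependent. -/
import Mathlib


open MvPolynomial

abbrev Poly2 := MvPolynomial (Fin 2) ℂ
abbrev Pt := Fin 2 → ℂ

/-- `p` is an `n`-fundamental polynomial of the point `A` with respect to the set `S`. -/
def IsFund (n : ℕ) (S : Finset Pt) (A : Pt) (p : Poly2) : Prop :=
  p.totalDegree ≤ n ∧ (∀ x ∈ S, x ≠ A → eval x p = 0) ∧ eval A p ≠ 0

/-- A finite point set is `n`-independent if each of its points has an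
`n`-fundamental polynomial. -/
def NIndep (n : ℕ) (S : Finset Pt) : Prop := ∀ A ∈ S, ∃ p : Poly2, IsFund n S A p

/-- A finite point set is essentially `k`-dependent if no point has a
`k`-fundamental polynomial. -/
def EssDep (k : ℕ) (S : Finset Pt) : Prop :=
  ∀ A ∈ S, ∀ p : Poly2, p.totalDegree ≤ k →
    (∀ x ∈ S, x ≠ A → eval x p = 0) → eval A p = 0

theorem stmt6 (k n : ℕ) (hnk : n < k) (X Y : Finset Pt) (σ : Poly2)
    (hσ : σ ≠ 0) (hdeg : σ.totalDegree = n) (hX : EssDep k X)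
    (hY : ∀ x, x ∈ Y ↔ x ∈ X ∧ eval x σ ≠ 0) (hYne : Y.Nonempty) :
    EssDep (k - n) Y := by
  intro A hA p hp hvan
  obtain ⟨hAX, hAσ⟩ := (hY A).1 hA
  have hdegq : (σ * p).totalDegree ≤ k := by
    calc (σ * p).totalDegree ≤ σ.totalDegree + p.totalDegree := totalDegree_mul σ p
    _ ≤ n + (k - n) := by omega
    _ = k := by omega
  have hq := hX A hAX (σ * p) hdegq (fun x hx hxA => by
    simp only [eval_mul]
    by_cases hxσ : eval x σ = 0
    · simp [hxσ]
    · rw [hvan x ((hY x).2 ⟨hx, hxσ⟩) hxA, mul_zero])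
  rw [eval_mul] at hq
  exact (mul_eq_zero.1 hq).resolve_left hAσ
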